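/- Let N, M be positive natural numbers, A21 a real M × N matrix such that Q = A21·A21ᵀ is invertible, and fix x_d* ∈ ℝ^N and x_nd* ∈ ℝ^M; set v₁ = x_nd* − (1/2)·A21·x_d*. Then for every continuously differentiable trajectory x_d : ℝ → ℝ^N satisfying x_d(0) = 0, x_d(1) = x_d*, and A21 · (∫₀¹ x_d(τ) dτ) = x_nd*, the control energy satisfies ∫₀¹ ‖x_d'(t)‖² dt ≥ 12·⟨v₁, Q⁻¹·v₁⟩ + ⟨x_d*, x_d*⟩. -/

import Mathlib

open Matrix MeasureTheory intervalIntegral Set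

private lemma hasDerivAt_dot {n : ℕ} (a : Fin n → ℝ) {f : ℝ → Fin n → ℝ} {f' : Fin n → ℝ} {t : ℝ}
    (hf : HasDerivAt f f' t) : HasDerivAt (fun s => a ⬝ᵥ f s) (a ⬝ᵥ f') t := by
  simp only [dotProduct]
  exact HasDerivAt.fun_sum fun i _ => ((hasDerivAt_pi.mp hf) i).const_mul (a i)

private lemma continuous_dot2 {n : ℕ} {f g : ℝ → Fin n → ℝ}
    (hf : Continuous f) (hg : Continuous g) : Continuous (fun s => f s ⬝ᵥ g s) := by
  simp only [dotProduct]
  exact continuous_finset_sum _ fun i _ =>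
    ((continuous_apply i).comp hf).mul ((continuous_apply i).comp hg)

private lemma dot_intervalIntegral {n : ℕ} (a : Fin n → ℝ) {f : ℝ → Fin n → ℝ}
    (hf : Continuous f) :
    a ⬝ᵥ (∫ t in (0:ℝ)..1, f t) = ∫ t in (0:ℝ)..1, a ⬝ᵥ f t := by
  have hint : IntervalIntegrable f volume 0 1 := hf.intervalIntegrable 0 1
  have happ : ∀ i, (∫ t in (0:ℝ)..1, f t) i = ∫ t in (0:ℝ)..1, f t i := by
    intro i
    have := (ContinuousLinearMap.proj (R := ℝ) (φ := fun _ : Fin n => ℝ) i).intervalIntegral_comp_comm hint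
    simpa using this.symm
  simp only [dotProduct, happ]
  have hsum := intervalIntegral.integral_finset_sum (μ := MeasureTheory.volume) (a := (0:ℝ)) (b := 1)
      (f := fun (i : Fin n) (t : ℝ) => a i * f t i) (s := Finset.univ)
      (fun i _ => (continuous_const.mul ((continuous_apply i).comp hf)).intervalIntegrable 0 1)
  rw [hsum]
  exact Finset.sum_congr rfl fun i _ => (intervalIntegral.integral_const_mul _ _).symm

theorem control_energy_lower_bound_trajectory
    (N M : ℕ) (hN : 0 < N) (hM : 0 < M)
    (A21 : Matrix (Fin M) (Fin N) ℝ)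
    (Q : Matrix (Fin M) (Fin M) ℝ) (hQ : Q = A21 * A21ᵀ) (hQinv : IsUnit Q)
    (xds : Fin N → ℝ) (xnds : Fin M → ℝ)
    (v₁ : Fin M → ℝ) (hv₁ : v₁ = xnds - (1 / 2 : ℝ) • A21.mulVec xds)
    (xd : ℝ → Fin N → ℝ) (hxd : ContDiff ℝ 1 xd)
    (h0 : xd 0 = 0) (h1 : xd 1 = xds)
    (hconstraint : A21.mulVec (∫ τ in (0:ℝ)..1, xd τ) = xnds) :
    (∫ t in (0:ℝ)..1, (deriv xd t) ⬝ᵥ (deriv xd t)) ≥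
      12 * (v₁ ⬝ᵥ Q⁻¹.mulVec v₁) + xds ⬝ᵥ xds := by
  -- basic continuity / differentiability facts
  have hxdc : Continuous xd := hxd.continuous
  have hderiv : ∀ t, HasDerivAt xd (deriv xd t) t := fun t =>
    (hxd.differentiable one_ne_zero t).hasDerivAt
  have hdc : Continuous (deriv xd) := hxd.continuous_deriv le_rfl
  -- the auxiliary vectors
  set w : Fin M → ℝ := Q⁻¹.mulVec v₁ with hw
  set c : Fin N → ℝ := A21ᵀ.mulVec w with hc
  have hdet : IsUnit Q.det := (Matrix.isUnit_iff_isUnit_det Q).mp hQinv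
  have hQw : Q.mulVec w = v₁ := by
    rw [hw, Matrix.mulVec_mulVec, Matrix.mul_nonsing_inv _ hdet, Matrix.one_mulVec]
  have hS : w ⬝ᵥ v₁ = v₁ ⬝ᵥ Q⁻¹.mulVec v₁ := by rw [hw, dotProduct_comm]
  -- c ⬝ x = w ⬝ (A21 x)
  have hcdot : ∀ x : Fin N → ℝ, c ⬝ᵥ x = w ⬝ᵥ A21.mulVec x := by
    intro x
    rw [hc, Matrix.dotProduct_mulVec, Matrix.mulVec_transpose]
  have hcc : c ⬝ᵥ c = w ⬝ᵥ v₁ := by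
    rw [hcdot c, hc, Matrix.mulVec_mulVec, ← hQ, hQw]
  -- the comparison function g t = xds + (6 - 12 t) • c
  set g : ℝ → Fin N → ℝ := fun t => xds + (6 - 12 * t) • c with hg
  have hgc : Continuous g := by
    apply continuous_const.add
    exact ((continuous_const.sub (continuous_const.mul continuous_id')).smul continuous_const)
  -- pointwise bound : ẋ ⬝ ẋ ≥ 2 (g ⬝ ẋ) - g ⬝ g
  have hpt : ∀ t : ℝ, 2 * (g t ⬝ᵥ deriv xd t) - g t ⬝ᵥ g t ≤ deriv xd t ⬝ᵥ deriv xd t := by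
    intro t
    have h0' : 0 ≤ (deriv xd t - g t) ⬝ᵥ (deriv xd t - g t) :=
      Finset.sum_nonneg fun i _ => mul_self_nonneg _
    have hexp : (deriv xd t - g t) ⬝ᵥ (deriv xd t - g t) =
        deriv xd t ⬝ᵥ deriv xd t - 2 * (g t ⬝ᵥ deriv xd t) + g t ⬝ᵥ g t := by
      rw [sub_dotProduct, dotProduct_sub, dotProduct_sub,
        dotProduct_comm (deriv xd t) (g t)]
      ring
    linarith [hexp ▸ h0']
  -- integrability facts
  have int_dd : IntervalIntegrable (fun t => deriv xd t ⬝ᵥ deriv xd t) volume 0 1 :=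
    (continuous_dot2 hdc hdc).intervalIntegrable 0 1
  have int_gd : IntervalIntegrable (fun t => g t ⬝ᵥ deriv xd t) volume 0 1 :=
    (continuous_dot2 hgc hdc).intervalIntegrable 0 1
  have int_gg : IntervalIntegrable (fun t => g t ⬝ᵥ g t) volume 0 1 :=
    (continuous_dot2 hgc hgc).intervalIntegrable 0 1
  -- step 1: monotonicity
  have step1 : (∫ t in (0:ℝ)..1, 2 * (g t ⬝ᵥ deriv xd t) - g t ⬝ᵥ g t) ≤
      ∫ t in (0:ℝ)..1, deriv xd t ⬝ᵥ deriv xd t := by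
    apply intervalIntegral.integral_mono_on (by norm_num)
      (((int_gd.const_mul 2)).sub int_gg) int_dd
    exact fun t _ => hpt t
  -- compute ∫ g ⬝ ẋ
  have int_cxd : IntervalIntegrable (fun t => c ⬝ᵥ xd t) volume 0 1 :=
    (continuous_dot2 continuous_const hxdc).intervalIntegrable 0 1
  have int_cd : IntervalIntegrable (fun t => c ⬝ᵥ deriv xd t) volume 0 1 :=
    (continuous_dot2 continuous_const hdc).intervalIntegrable 0 1
  -- ∫ (xds + 6c) ⬝ ẋ = (xds + 6c) ⬝ xds
  have I1a : (∫ t in (0:ℝ)..1, (xds + (6:ℝ) • c) ⬝ᵥ deriv xd t)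
      = (xds + (6:ℝ) • c) ⬝ᵥ xds := by
    have := intervalIntegral.integral_eq_sub_of_hasDerivAt
      (f := fun t => (xds + (6:ℝ) • c) ⬝ᵥ xd t)
      (f' := fun t => (xds + (6:ℝ) • c) ⬝ᵥ deriv xd t)
      (a := 0) (b := 1)
      (fun t _ => hasDerivAt_dot _ (hderiv t))
      ((continuous_dot2 continuous_const hdc).intervalIntegrable 0 1)
    rw [this]
    simp [h0, h1]
  -- integration by parts : ∫ t * (c ⬝ ẋ) = c ⬝ xds - ∫ c ⬝ xd
  have I1b : (∫ t in (0:ℝ)..1, t * (c ⬝ᵥ deriv xd t))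
      = c ⬝ᵥ xds - ∫ t in (0:ℝ)..1, c ⬝ᵥ xd t := by
    have := intervalIntegral.integral_mul_deriv_eq_deriv_mul
      (u := fun t : ℝ => t) (u' := fun _ => (1:ℝ))
      (v := fun t => c ⬝ᵥ xd t) (v' := fun t => c ⬝ᵥ deriv xd t)
      (a := 0) (b := 1)
      (fun t _ => hasDerivAt_id t)
      (fun t _ => hasDerivAt_dot _ (hderiv t))
      ((continuous_const).intervalIntegrable 0 1)
      int_cd
    rw [this]
    simp [h0, h1]
  -- ∫ c ⬝ xd = w ⬝ xnds
  have I1c : (∫ t in (0:ℝ)..1, c ⬝ᵥ xd t) = w ⬝ᵥ xnds := by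
    rw [← dot_intervalIntegral c hxdc, hcdot, hconstraint]
  -- decompose g t ⬝ ẋ t
  have hgdot : ∀ t : ℝ, g t ⬝ᵥ deriv xd t
      = (xds + (6:ℝ) • c) ⬝ᵥ deriv xd t - 12 * (t * (c ⬝ᵥ deriv xd t)) := by
    intro t
    simp only [hg, add_dotProduct, smul_dotProduct, smul_eq_mul]
    ring
  have I1 : (∫ t in (0:ℝ)..1, g t ⬝ᵥ deriv xd t)
      = xds ⬝ᵥ xds + 12 * (w ⬝ᵥ v₁) := by
    have hsplit : (∫ t in (0:ℝ)..1, g t ⬝ᵥ deriv xd t)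
        = (∫ t in (0:ℝ)..1, (xds + (6:ℝ) • c) ⬝ᵥ deriv xd t)
          - 12 * ∫ t in (0:ℝ)..1, t * (c ⬝ᵥ deriv xd t) := by
      rw [← intervalIntegral.integral_const_mul, ← intervalIntegral.integral_sub]
      · exact intervalIntegral.integral_congr fun t _ => hgdot t
      · exact (continuous_dot2 continuous_const hdc).intervalIntegrable 0 1
      · exact ((continuous_id'.mul (continuous_dot2 continuous_const hdc)).intervalIntegrable 0 1).const_mul 12
    rw [hsplit, I1a, I1b, I1c]
    have hv : w ⬝ᵥ v₁ = w ⬝ᵥ xnds - (1/2) * (c ⬝ᵥ xds) := by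
      rw [hv₁, dotProduct_sub, dotProduct_smul, hcdot, smul_eq_mul]
    simp only [add_dotProduct, smul_dotProduct, smul_eq_mul] at *
    linarith [hv]
  -- ∫ g ⬝ g = xds ⬝ xds + 12 * (c ⬝ c)
  have I2 : (∫ t in (0:ℝ)..1, g t ⬝ᵥ g t) = xds ⬝ᵥ xds + 12 * (c ⬝ᵥ c) := by
    have hexp : ∀ t : ℝ, g t ⬝ᵥ g t
        = (xds ⬝ᵥ xds + 12 * (c ⬝ᵥ xds) + 36 * (c ⬝ᵥ c))
          + (-(24 * (c ⬝ᵥ xds)) - 144 * (c ⬝ᵥ c)) * t + (144 * (c ⬝ᵥ c)) * t ^ 2 := by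
      intro t
      simp only [hg, add_dotProduct, dotProduct_add, smul_dotProduct,
        dotProduct_smul, smul_eq_mul, dotProduct_comm c xds]
      ring
    rw [intervalIntegral.integral_congr (fun t _ => hexp t)]
    rw [intervalIntegral.integral_add
        (f := fun x => (xds ⬝ᵥ xds + 12 * (c ⬝ᵥ xds) + 36 * (c ⬝ᵥ c))
          + (-(24 * (c ⬝ᵥ xds)) - 144 * (c ⬝ᵥ c)) * x) (g := fun x => (144 * (c ⬝ᵥ c)) * x ^ 2)
        ((continuous_const.add (continuous_const.mul continuous_id')).intervalIntegrable 0 1)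
        ((continuous_const.mul (continuous_pow 2)).intervalIntegrable 0 1),
      intervalIntegral.integral_add (f := fun _ => xds ⬝ᵥ xds + 12 * (c ⬝ᵥ xds) + 36 * (c ⬝ᵥ c))
        (g := fun x => (-(24 * (c ⬝ᵥ xds)) - 144 * (c ⬝ᵥ c)) * x)
        (continuous_const.intervalIntegrable 0 1)
        ((continuous_const.mul continuous_id').intervalIntegrable 0 1),
      intervalIntegral.integral_const_mul, intervalIntegral.integral_const_mul,
      intervalIntegral.integral_const, integral_id, integral_pow]
    norm_num
    ring
  -- combine
  have step2 : (∫ t in (0:ℝ)..1, 2 * (g t ⬝ᵥ deriv xd t) - g t ⬝ᵥ g t)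
      = 12 * (v₁ ⬝ᵥ Q⁻¹.mulVec v₁) + xds ⬝ᵥ xds := by
    rw [intervalIntegral.integral_sub (int_gd.const_mul 2) int_gg,
      intervalIntegral.integral_const_mul, I1, I2, hcc, hS]
    ring
  rw [ge_iff_le, ← step2]
  exact step1
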